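/- Let λ > 0, n ≥ 1, θ = 2/(1+2λ), and 0 < x < 1. Define A = n(n+2λ+1)x^{2θ} - (n+1)(n+2λ), B = n(n+λ+1)x^{θ} - (n+1)(n+λ), C = (n+λ)(n+2λ+1)x^{θ} - (n+λ+1)(n+2λ). Then A² - 4x² B C > 0. -/

import Mathlib

set_option maxHeartbeats 1600000 in
theorem resultant_positive_lambda_pos
    (l : ℝ) (hl : l > 0) (θ : ℝ) (hθ : θ = 2 / (1 + 2 * l))
    (n : ℝ) (hn : 1 ≤ n) (x : ℝ) (hx1 : 0 < x) (hx2 : x < 1) :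
    (n * (n + 2 * l + 1) * x ^ (2 * θ) - (n + 1) * (n + 2 * l)) ^ 2
      - 4 * x ^ 2 * (n * (n + l + 1) * x ^ θ - (n + 1) * (n + l))
        * ((n + l) * (n + 2 * l + 1) * x ^ θ - (n + l + 1) * (n + 2 * l)) > 0 := by
  have hlden : (1 : ℝ) + 2 * l ≠ 0 := by positivity
  have hθpos : 0 < θ := by rw [hθ]; positivity
  set y := x ^ θ with hy
  have hy0 : 0 < y := Real.rpow_pos_of_pos hx1 θ
  have hy1 : y < 1 := Real.rpow_lt_one hx1.le hx2 hθpos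
  have h1my : 0 < 1 - y := by linarith
  have hpmul : θ * (l + 1 / 2) = 1 := by
    rw [hθ]; field_simp; ring
  have hxy : y ^ (l + 1 / 2) = x := by
    rw [hy, ← Real.rpow_mul hx1.le, hpmul, Real.rpow_one]
  have h2θ : x ^ (2 * θ) = y * y := by
    rw [two_mul, Real.rpow_add hx1]
  rw [h2θ]
  clear_value y
  clear hy
  -- abbreviations
  set P : ℝ := (n + 1) * (n + l) - n * (n + l + 1) * y with hP
  set Q : ℝ := (n + l + 1) * (n + 2 * l) - (n + l) * (n + 2 * l + 1) * y with hQ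
  set S : ℝ := (n + 1) * (n + 2 * l) - n * (n + 2 * l + 1) * (y * y) with hS
  clear_value P Q S
  have hPpos : 0 < P := by
    have : n * (n + l + 1) * y < n * (n + l + 1) * 1 := by
      apply mul_lt_mul_of_pos_left hy1; positivity
    rw [hP]; nlinarith
  have hQpos : 0 < Q := by
    have : (n + l) * (n + 2 * l + 1) * y < (n + l) * (n + 2 * l + 1) * 1 := by
      apply mul_lt_mul_of_pos_left hy1; positivity
    rw [hQ]; nlinarith
  have hMpos : 0 < P + Q := by linarith
  -- the key inequality: x * (P + Q) < S
  have key : x * (P + Q) < S := by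
    rcases le_total 1 (l + 1 / 2) with hc | hc
    · -- l ≥ 1/2 : use x = y^(l+1/2) ≤ y / (y + (l+1/2)(1-y))
      have hs : (-1 : ℝ) ≤ 1 / y - 1 := by
        have : 0 < 1 / y := by positivity
        linarith
      have hb := one_add_mul_self_le_rpow_one_add hs hc
      have h1 : (1 : ℝ) + (1 / y - 1) = 1 / y := by ring
      rw [h1, show (1:ℝ)/y = y⁻¹ from one_div y, Real.inv_rpow hy0.le, hxy] at hb
      -- hb : 1 + (l+1/2) * (y⁻¹ - 1) ≤ x⁻¹
      have hb2 : (1 + (l + 1 / 2) * (y⁻¹ - 1)) * x ≤ 1 := by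
        have h2 := mul_le_mul_of_nonneg_right hb hx1.le
        rwa [inv_mul_cancel₀ hx1.ne'] at h2
      have hb3 : x * (y + (l + 1 / 2) * (1 - y)) ≤ y := by
        have h2 := mul_le_mul_of_nonneg_right hb2 hy0.le
        have e : (1 + (l + 1 / 2) * (y⁻¹ - 1)) * x * y
            = x * (y + (l + 1 / 2) * (1 - y)) := by
          field_simp
        rw [e, one_mul] at h2
        exact h2
      have hn0 : (0:ℝ) < n := lt_of_lt_of_le one_pos hn
      have hprods : (0:ℝ) < n*n ∧ (0:ℝ) < n*l ∧ (0:ℝ) < n*n*l ∧ (0:ℝ) < n*l*l ∧ (0:ℝ) < l*l :=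
        ⟨mul_pos hn0 hn0, mul_pos hn0 hl, mul_pos (mul_pos hn0 hn0) hl,
         mul_pos (mul_pos hn0 hl) hl, mul_pos hl hl⟩
      obtain ⟨q1, q2, q3, q4, q5⟩ := hprods
      have hden : 0 < y + (l + 1 / 2) * (1 - y) := by nlinarith [mul_pos hl h1my]
      have hP0 : (0:ℝ) < n^2/2 + n/2 + n^2*l + 2*n*l^2 + 2*n*l + 2*l^2 + l := by nlinarith
      have hP01 : (0:ℝ) < 2*n^2*l + 4*n*l^2 + 2*n*l + 2*l^2 + l := by nlinarith
      have hcert : 0 < (1 - y)^2 * ((1 - y) * (n^2/2 + n/2 + n^2*l + 2*n*l^2 + 2*n*l + 2*l^2 + l)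
          + y * (2*n^2*l + 4*n*l^2 + 2*n*l + 2*l^2 + l)) :=
        mul_pos (pow_pos h1my 2) (add_pos (mul_pos h1my hP0) (mul_pos hy0 hP01))
      have hid : S * (y + (l + 1 / 2) * (1 - y)) - y * (P + Q)
          = (1 - y)^2 * ((1 - y) * (n^2/2 + n/2 + n^2*l + 2*n*l^2 + 2*n*l + 2*l^2 + l)
            + y * (2*n^2*l + 4*n*l^2 + 2*n*l + 2*l^2 + l)) := by
        rw [hP, hQ, hS]; ring
      have hpoly : y * (P + Q) < S * (y + (l + 1 / 2) * (1 - y)) := by linarith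
      have h6 : x * (P + Q) * (y + (l + 1 / 2) * (1 - y))
          < S * (y + (l + 1 / 2) * (1 - y)) := by
        have h7 := mul_le_mul_of_nonneg_right hb3 hMpos.le
        nlinarith [h7, hpoly]
      exact lt_of_mul_lt_mul_right h6 hden.le
    · -- l ≤ 1/2 : use x = y^(l+1/2) ≤ 1 + (l+1/2)(y-1)
      have hs : (-1 : ℝ) ≤ y - 1 := by linarith
      have hb := rpow_one_add_le_one_add_mul_self hs (by linarith : (0:ℝ) ≤ l + 1/2) hc
      have h1 : (1 : ℝ) + (y - 1) = y := by ring
      rw [h1, hxy] at hb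
      -- hb : x ≤ 1 + (l+1/2) * (y - 1)
      have hn0 : (0:ℝ) < n := lt_of_lt_of_le one_pos hn
      have hK : (0:ℝ) < 2*n*l + 2*n^2*l + 4*n*l^2 + 2*l^3 + 2*l^2 + l/2 := by
        nlinarith [mul_pos hn0 hl, mul_pos (mul_pos hn0 hn0) hl,
          mul_pos (mul_pos hn0 hl) hl, mul_pos (mul_pos hl hl) hl, mul_pos hl hl]
      have hcert : 0 < (1 - y)^2 * (2*n*l + 2*n^2*l + 4*n*l^2 + 2*l^3 + 2*l^2 + l/2) :=
        mul_pos (pow_pos h1my 2) hK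
      have hid : S - (1 + (l + 1 / 2) * (y - 1)) * (P + Q)
          = (1 - y)^2 * (2*n*l + 2*n^2*l + 4*n*l^2 + 2*l^3 + 2*l^2 + l/2) := by
        rw [hP, hQ, hS]; ring
      have h7 := mul_le_mul_of_nonneg_right hb hMpos.le
      nlinarith [h7, hid, hcert]
  -- conclude
  have hxPQ : 0 ≤ x * (P + Q) := mul_nonneg hx1.le hMpos.le
  have h4 : (x * (P + Q)) ^ 2 < S ^ 2 := by
    exact pow_lt_pow_left₀ key hxPQ (by norm_num)
  have h5 : 4 * x ^ 2 * P * Q ≤ (x * (P + Q)) ^ 2 := by nlinarith [sq_nonneg (x * (P - Q))]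
  have hgoal : (n * (n + 2 * l + 1) * (y * y) - (n + 1) * (n + 2 * l)) ^ 2
      - 4 * x ^ 2 * (n * (n + l + 1) * y - (n + 1) * (n + l))
        * ((n + l) * (n + 2 * l + 1) * y - (n + l + 1) * (n + 2 * l))
      = S ^ 2 - 4 * x ^ 2 * P * Q := by rw [hP, hQ, hS]; ring
  rw [hgoal]; linarith
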